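/- Let g = ⊕_{n≥0} g^n be a graded Lie algebra. Define g_c with (g_c)^0 = g^0 and (g_c)^n equal to the direct sum of n+1 copies of g^n, and bracket ⟦(f₁,...,f_{m+1}), (g₁,...,g_{n+1})⟧ whose i-th component is Σ_{q+r=i+1} [f_q, g_r]. Then (g_c, ⟦·,·⟧) is a graded Lie algebra. -/

import Mathlib

/-- Transport along an equality of degrees. -/
def GradedCast {F : ℕ → Type*} {a b : ℕ} (h : a = b) (x : F a) : F b := h ▸ x

/-- The bracket on `g_c`, where `(g_c)^n` is the direct sum of `n+1` copies of `g^n`,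
modelled as `Fin (n+1) → g n`.  The `i`-th component of `⟦f, f'⟧` is
`∑_{q+r=i} [f_q, f'_r]`. -/
def gcBr {g : ℕ → Type*} [∀ n, AddCommGroup (g n)]
    (br : ∀ {m n : ℕ}, g m → g n → g (m + n)) {m n : ℕ}
    (f : Fin (m + 1) → g m) (f' : Fin (n + 1) → g n) : Fin (m + n + 1) → g (m + n) :=
  fun i => ∑ q ∈ Finset.range (i.1 + 1),
    if h : q ≤ m ∧ i.1 - q ≤ n then br (f ⟨q, by omega⟩) (f' ⟨i.1 - q, by omega⟩) else 0

open Finset Finset.Nat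

namespace GCAux

theorem cast_apply {g : ℕ → Type*} {a b : ℕ} (h : a = b) (f : Fin (a+1) → g a) (i : Fin (b+1)) :
    GradedCast (F := fun k => Fin (k+1) → g k) h f i
      = GradedCast (F := g) h (f ⟨i.1, by omega⟩) := by
  subst h; rfl

theorem cast_smul {g : ℕ → Type*} [∀ n, AddCommGroup (g n)] {a b : ℕ} (h : a = b) (c : ℤ)
    (x : g a) : GradedCast (F := g) h (c • x) = c • GradedCast (F := g) h x := by subst h; rfl

theorem cast_sum {g : ℕ → Type*} [∀ n, AddCommGroup (g n)] {a b : ℕ} (h : a = b) {ι : Type*}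
    (s : Finset ι) (f : ι → g a) :
    GradedCast (F := g) h (∑ i ∈ s, f i) = ∑ i ∈ s, GradedCast (F := g) h (f i) := by
  subst h; rfl

theorem cast_cast {g : ℕ → Type*} {a b c : ℕ} (h : a = b) (h' : b = c) (x : g a) :
    GradedCast (F := g) h' (GradedCast (F := g) h x) = GradedCast (F := g) (h.trans h') x := by
  subst h; subst h'; rfl

theorem triple_shift {M : Type*} [AddCommMonoid M] (f : ℕ → ℕ → ℕ → M) (n : ℕ) :
    ∑ p ∈ antidiagonal n, ∑ q ∈ antidiagonal p.2, f p.1 q.1 q.2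
      = ∑ p ∈ antidiagonal n, ∑ q ∈ antidiagonal p.1, f q.1 q.2 p.2 := by
  rw [Finset.sum_sigma', Finset.sum_sigma']
  refine Finset.sum_nbij' (i := fun x => ⟨(x.1.1 + x.2.1, x.2.2), (x.1.1, x.2.1)⟩)
    (j := fun x => ⟨(x.2.1, x.2.2 + x.1.2), (x.2.2, x.1.2)⟩) ?_ ?_ ?_ ?_ ?_
  all_goals rintro ⟨⟨a, s⟩, ⟨b, c⟩⟩ h
  all_goals simp only [Finset.mem_sigma, Finset.HasAntidiagonal.mem_antidiagonal] at h ⊢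
  · exact ⟨by omega, trivial⟩
  · exact ⟨by omega, trivial⟩
  · rw [h.2]
  · rw [h.2]

section
variable {g : ℕ → Type*} [∀ n, AddCommGroup (g n)]
  (br : ∀ {m n : ℕ}, g m → g n → g (m + n))
  (hL : ∀ {m n : ℕ} (x y : g m) (z : g n), br (x + y) z = br x z + br y z)
  (hR : ∀ {m n : ℕ} (x : g m) (y z : g n), br x (y + z) = br x y + br x z)

include hL in
theorem br_zero_left {m n : ℕ} (z : g n) : br (0 : g m) z = 0 := by
  have h := hL (0 : g m) 0 z
  rw [add_zero] at h
  exact (left_eq_add.mp h)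

include hR in
theorem br_zero_right {m n : ℕ} (x : g m) : br x (0 : g n) = 0 := by
  have h := hR x (0 : g n) 0
  rw [add_zero] at h
  exact (left_eq_add.mp h)

include hL in
theorem br_sum_left {m n : ℕ} (z : g n) {ι : Type*} (s : Finset ι) (f : ι → g m) :
    br (∑ i ∈ s, f i) z = ∑ i ∈ s, br (f i) z := by
  classical
  induction s using Finset.induction with
  | empty => simpa using br_zero_left @br @hL z
  | insert _ _ hnm ih => rw [Finset.sum_insert hnm, Finset.sum_insert hnm, hL, ih]

include hR in
theorem br_sum_right {m n : ℕ} (x : g m) {ι : Type*} (s : Finset ι) (f : ι → g n) :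
    br x (∑ i ∈ s, f i) = ∑ i ∈ s, br x (f i) := by
  classical
  induction s using Finset.induction with
  | empty => simpa using br_zero_right @br @hR x
  | insert _ _ hnm ih => rw [Finset.sum_insert hnm, Finset.sum_insert hnm, hR, ih]

/-- zero extension of a component family -/
def Ext {g : ℕ → Type*} [∀ n, AddCommGroup (g n)] {m : ℕ}
    (x : Fin (m + 1) → g m) (q : ℕ) : g m :=
  if h : q ≤ m then x ⟨q, by omega⟩ else 0

include hL hR in
theorem gcBr_apply {m n : ℕ} (x : Fin (m + 1) → g m) (y : Fin (n + 1) → g n)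
    (i : Fin (m + n + 1)) :
    gcBr br x y i = ∑ p ∈ antidiagonal i.1, br (Ext x p.1) (Ext y p.2) := by
  rw [Finset.Nat.sum_antidiagonal_eq_sum_range_succ (fun a b => br (Ext x a) (Ext y b))]
  unfold gcBr
  refine Finset.sum_congr rfl fun q hq => ?_
  by_cases h : q ≤ m ∧ i.1 - q ≤ n
  · rw [dif_pos h]
    unfold Ext
    rw [dif_pos h.1, dif_pos h.2]
  · rw [dif_neg h]
    push_neg at h
    unfold Ext
    by_cases h1 : q ≤ m
    · rw [dif_pos h1, dif_neg (by omega), br_zero_right @br @hR]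
    · rw [dif_neg h1, br_zero_left @br @hL]

include hL hR in
theorem Ext_gcBr {m n : ℕ} (x : Fin (m + 1) → g m) (y : Fin (n + 1) → g n) (s : ℕ) :
    Ext (gcBr br x y) s = ∑ p ∈ antidiagonal s, br (Ext x p.1) (Ext y p.2) := by
  by_cases h : s ≤ m + n
  · rw [show Ext (gcBr br x y) s = gcBr br x y ⟨s, by omega⟩ from dif_pos h]
    exact gcBr_apply @br @hL @hR x y ⟨s, by omega⟩
  · rw [show Ext (gcBr br x y) s = 0 from dif_neg h]
    symm
    refine Finset.sum_eq_zero fun p hp => ?_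
    rw [Finset.HasAntidiagonal.mem_antidiagonal] at hp
    by_cases h1 : p.1 ≤ m
    · rw [show Ext y p.2 = 0 from dif_neg (show ¬ p.2 ≤ n by omega), br_zero_right @br @hR]
    · rw [show Ext x p.1 = 0 from dif_neg h1, br_zero_left @br @hL]

end
end GCAux

open GCAux

/-- If `g` is a graded Lie algebra, then `(g_c, ⟦·,·⟧)` is a graded Lie algebra: the
bracket `gcBr` is graded skew-symmetric and satisfies the graded Jacobi identity. -/
theorem gc_is_graded_lie
    {g : ℕ → Type*} [∀ n, AddCommGroup (g n)]
    (br : ∀ {m n : ℕ}, g m → g n → g (m + n))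
    (br_add_left : ∀ {m n : ℕ} (x y : g m) (z : g n), br (x + y) z = br x z + br y z)
    (br_add_right : ∀ {m n : ℕ} (x : g m) (y z : g n), br x (y + z) = br x y + br x z)
    (br_skew : ∀ {m n : ℕ} (x : g m) (y : g n),
      br x y = (-(-1 : ℤ) ^ (m * n)) • GradedCast (F := g) (Nat.add_comm n m) (br y x))
    (br_jacobi : ∀ {m n p : ℕ} (x : g m) (y : g n) (z : g p),
      br x (br y z)
        = GradedCast (F := g) (Nat.add_assoc m n p) (br (br x y) z)
          + ((-1 : ℤ) ^ (m * n)) •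
              GradedCast (F := g) (by omega : n + (m + p) = m + (n + p)) (br y (br x z))) :
    (∀ (m n : ℕ) (x : Fin (m + 1) → g m) (y : Fin (n + 1) → g n),
      gcBr br x y
        = (-(-1 : ℤ) ^ (m * n)) •
            GradedCast (F := fun k => Fin (k + 1) → g k) (Nat.add_comm n m) (gcBr br y x)) ∧
    (∀ (m n p : ℕ) (x : Fin (m + 1) → g m) (y : Fin (n + 1) → g n) (z : Fin (p + 1) → g p),
      gcBr br x (gcBr br y z)
        = GradedCast (F := fun k => Fin (k + 1) → g k) (Nat.add_assoc m n p)
            (gcBr br (gcBr br x y) z)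
          + ((-1 : ℤ) ^ (m * n)) •
              GradedCast (F := fun k => Fin (k + 1) → g k)
                (by omega : n + (m + p) = m + (n + p)) (gcBr br y (gcBr br x z))) := by
  have hL := @br_add_left
  have hR := @br_add_right
  refine ⟨?_, ?_⟩
  · intro m n x y
    funext i
    rw [gcBr_apply @br @hL @hR, Pi.smul_apply, cast_apply (g := g),
        gcBr_apply @br @hL @hR, cast_sum, Finset.smul_sum,
        ← Finset.Nat.sum_antidiagonal_swap]
    refine Finset.sum_congr rfl fun q hq => ?_
    exact br_skew _ _
  · intro m n p x y z
    funext i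
    calc gcBr br x (gcBr br y z) i
        = ∑ p1 ∈ Finset.HasAntidiagonal.antidiagonal i.1, ∑ q ∈ Finset.HasAntidiagonal.antidiagonal p1.2,
            br (Ext x p1.1) (br (Ext y q.1) (Ext z q.2)) := by
          rw [gcBr_apply @br @hL @hR]
          refine Finset.sum_congr rfl fun p1 _ => ?_
          rw [Ext_gcBr @br @hL @hR, br_sum_right @br @hR]
      _ = (∑ p1 ∈ Finset.HasAntidiagonal.antidiagonal i.1, ∑ q ∈ Finset.HasAntidiagonal.antidiagonal p1.2,
            GradedCast (F := g) (Nat.add_assoc m n p)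
              (br (br (Ext x p1.1) (Ext y q.1)) (Ext z q.2)))
          + (∑ p1 ∈ Finset.HasAntidiagonal.antidiagonal i.1, ∑ q ∈ Finset.HasAntidiagonal.antidiagonal p1.2,
            ((-1 : ℤ) ^ (m * n)) •
              GradedCast (F := g) (by omega : n + (m + p) = m + (n + p))
                (br (Ext y q.1) (br (Ext x p1.1) (Ext z q.2)))) := by
          rw [← Finset.sum_add_distrib]
          refine Finset.sum_congr rfl fun p1 _ => ?_
          rw [← Finset.sum_add_distrib]
          exact Finset.sum_congr rfl fun q _ => br_jacobi _ _ _
      _ = _ := by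
          refine congrArg₂ (· + ·) ?_ ?_
          · -- associator term
            rw [triple_shift (f := fun a b c => GradedCast (F := g) (Nat.add_assoc m n p)
              (br (br (Ext x a) (Ext y b)) (Ext z c)))]
            rw [cast_apply (g := g), gcBr_apply @br @hL @hR, cast_sum]
            refine Finset.sum_congr rfl fun p1 _ => ?_
            rw [Ext_gcBr @br @hL @hR, br_sum_left @br @hL, cast_sum]
          · -- (-1)^(mn) term
            rw [triple_shift (f := fun a b c => ((-1 : ℤ) ^ (m * n)) •
              GradedCast (F := g) (by omega : n + (m + p) = m + (n + p))
                (br (Ext y b) (br (Ext x a) (Ext z c))))]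
            rw [Pi.smul_apply, cast_apply (g := g), gcBr_apply @br @hL @hR, cast_sum,
                Finset.smul_sum]
            simp only [Ext_gcBr @br @hL @hR, br_sum_right @br @hR, cast_sum,
              Finset.smul_sum]
            rw [triple_shift (f := fun a b c => ((-1 : ℤ) ^ (m * n)) •
              GradedCast (F := g) (by omega : n + (m + p) = m + (n + p))
                (br (Ext y a) (br (Ext x b) (Ext z c))))]
            refine Finset.sum_congr rfl fun p1 _ => ?_
            exact Finset.Nat.sum_antidiagonal_swap
              (f := fun q => ((-1 : ℤ) ^ (m * n)) •
                GradedCast (F := g) (by omega : n + (m + p) = m + (n + p))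
                  (br (Ext y q.1) (br (Ext x q.2) (Ext z p1.2))))
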